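/- (Query Decomposition Lemma, triangle instance) Let R(X,Z), S(Z,Y), T(X,Y) be finite binary relations. Then Σ_{(x,z)} |σ_{X=x,Z=z} R|^{1/2} · |σ_{Z=z} S|^{1/2} · |σ_{X=x} T|^{1/2} ≤ |R|^{1/2} · |S|^{1/2} · |T|^{1/2}, where σ denotes selection (so |σ_{X=x,Z=z}R| ∈ {0,1}, |σ_{Z=z}S| is the number of y with (z,y) ∈ S, and |σ_{X=x}T| is the number of y with (x,y) ∈ T), and the outer sum ranges over all pairs (x,z). -/
import Mathlib

theorem stmt_12 {V : Type*} [Fintype V] [DecidableEq V] (R S T : Finset (V × V)) :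
    (∑ p : V × V,
        Real.sqrt ((R.filter (fun q => q.1 = p.1 ∧ q.2 = p.2)).card : ℝ) *
        Real.sqrt ((S.filter (fun q => q.1 = p.2)).card : ℝ) *
        Real.sqrt ((T.filter (fun q => q.1 = p.1)).card : ℝ)) ≤
      Real.sqrt (R.card : ℝ) * Real.sqrt (S.card : ℝ) * Real.sqrt (T.card : ℝ) := by
  have key : (∑ p : V × V,
      Real.sqrt ((R.filter (fun q => q.1 = p.1 ∧ q.2 = p.2)).card : ℝ) *
        Real.sqrt (((S.filter (fun q => q.1 = p.2)).card : ℝ) *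
          ((T.filter (fun q => q.1 = p.1)).card : ℝ))) ≤
      Real.sqrt (∑ p : V × V, ((R.filter (fun q => q.1 = p.1 ∧ q.2 = p.2)).card : ℝ)) *
      Real.sqrt (∑ p : V × V, ((S.filter (fun q => q.1 = p.2)).card : ℝ) *
          ((T.filter (fun q => q.1 = p.1)).card : ℝ)) :=
    Real.sum_sqrt_mul_sqrt_le _ (fun p => by positivity) (fun p => by positivity)
  have hR : (∑ p : V × V, ((R.filter (fun q => q.1 = p.1 ∧ q.2 = p.2)).card : ℝ))
      = (R.card : ℝ) := by
    norm_cast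
    have h1 : ∀ p : V × V, (R.filter (fun q => q.1 = p.1 ∧ q.2 = p.2)).card
        = if p ∈ R then 1 else 0 := by
      intro p
      have : R.filter (fun q => q.1 = p.1 ∧ q.2 = p.2) = R.filter (fun q => q = p) :=
        Finset.filter_congr (fun q _ => by simp [Prod.ext_iff])
      rw [this, Finset.filter_eq']
      split <;> simp
    simp [h1]
  have hST : (∑ p : V × V, ((S.filter (fun q => q.1 = p.2)).card : ℝ) *
      ((T.filter (fun q => q.1 = p.1)).card : ℝ))
      = (S.card : ℝ) * (T.card : ℝ) := by
    rw [Fintype.sum_prod_type]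
    have hS : (∑ z : V, ((S.filter (fun q => q.1 = z)).card : ℝ)) = (S.card : ℝ) := by
      norm_cast
      rw [← Finset.card_eq_sum_card_fiberwise (f := fun q : V × V => q.1) (t := Finset.univ)]
      simp
    have hT : (∑ x : V, ((T.filter (fun q => q.1 = x)).card : ℝ)) = (T.card : ℝ) := by
      norm_cast
      rw [← Finset.card_eq_sum_card_fiberwise (f := fun q : V × V => q.1) (t := Finset.univ)]
      simp
    calc (∑ x : V, ∑ z : V, ((S.filter (fun q => q.1 = z)).card : ℝ) *
          ((T.filter (fun q => q.1 = x)).card : ℝ))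
        = (∑ x : V, ((T.filter (fun q => q.1 = x)).card : ℝ)) *
          (∑ z : V, ((S.filter (fun q => q.1 = z)).card : ℝ)) := by
          rw [Finset.sum_mul]; congr 1; funext x
          rw [Finset.mul_sum]; congr 1; funext z; ring
      _ = (S.card : ℝ) * (T.card : ℝ) := by rw [hS, hT]; ring
  rw [hR, hST, Real.sqrt_mul (by positivity), ← mul_assoc] at key
  refine le_trans (le_of_eq ?_) key
  congr 1; funext p
  rw [Real.sqrt_mul (by positivity), mul_assoc]
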